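/- The Berger code has the non-inclusive supports property: let l, k be natural numbers with l < 2^k, and for x : Fin l → Bool let w(x) denote the number of positions i with x(i) = true. Define the Berger encoding B(x) to be the binary string of length l + k whose first l bits are x and whose last k bits are the bitwise complement of the k-bit binary representation of w(x) (i.e., the j-th check bit is the negation of the j-th bit of w(x)). Then for all x ≠ x', the support of B(x) is not contained in the support of B(x'). -/

import Mathlib

/-- The Berger code has the non-inclusive supports property: appending to `x` the
bitwise complement of the `k`-bit binary representation of its weight yields a code
in which no codeword's support is contained in another's. -/
theorem berger_code_non_inclusive_supports
    (l k : ℕ) (hlk : l < 2 ^ k)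
    (B : (Fin l → Bool) → (Fin (l + k) → Bool))
    (hB : ∀ x : Fin l → Bool,
      B x = Fin.append x (fun j : Fin k =>
        ! (Nat.testBit ((Finset.univ.filter fun i : Fin l => x i = true).card) j))) :
    ∀ x x' : Fin l → Bool, x ≠ x' →
      ¬ ({i : Fin (l + k) | B x i = true} ⊆ {i : Fin (l + k) | B x' i = true}) := by
  intro x x' hne hsub
  set w := (Finset.univ.filter fun i : Fin l => x i = true).card with hw
  set w' := (Finset.univ.filter fun i : Fin l => x' i = true).card with hw'
  -- data bits: x i = true → x' i = true
  have hdata : ∀ i : Fin l, x i = true → x' i = true := by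
    intro i hi
    have := hsub (a := Fin.castAdd k i)
    simp only [Set.mem_setOf_eq, hB] at this
    rw [Fin.append_left, Fin.append_left] at this
    exact this hi
  -- check bits: testBit w' j → testBit w j  (for j < k)
  have hcheck : ∀ j : Fin k, Nat.testBit w' (j : ℕ) = true → Nat.testBit w (j : ℕ) = true := by
    intro j hj
    have := hsub (a := Fin.natAdd l j)
    simp only [Set.mem_setOf_eq, hB] at this
    rw [Fin.append_right, Fin.append_right] at this
    by_contra hcon
    simp only [Bool.not_eq_true] at hcon
    have := this (by simp [← hw, hcon])
    simp [← hw', hj] at this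
  have hwlt : w' < 2 ^ k :=
    lt_of_le_of_lt (le_trans (Finset.card_filter_le _ _) (by simp)) hlk
  have hbits : ∀ j : ℕ, Nat.testBit w' j = true → Nat.testBit w j = true := by
    intro j hj
    rcases lt_or_ge j k with h | h
    · exact hcheck ⟨j, h⟩ hj
    · exfalso
      rw [Nat.testBit_eq_false_of_lt (lt_of_lt_of_le hwlt (Nat.pow_le_pow_right (by norm_num) h))] at hj
      exact Bool.false_ne_true hj
  -- hence w' ≤ w
  have hor : w' &&& w = w' := by
    apply Nat.eq_of_testBit_eq
    intro j
    rw [Nat.testBit_and]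
    cases h : Nat.testBit w' j with
    | false => simp
    | true => simp [hbits j h]
  have hle : w' ≤ w := hor ▸ Nat.and_le_right
  -- but w < w' from strict support inclusion
  have hss : (Finset.univ.filter fun i : Fin l => x i = true) ⊂
      (Finset.univ.filter fun i : Fin l => x' i = true) := by
    constructor
    · intro i hi
      simp only [Finset.mem_filter, Finset.mem_univ, true_and] at hi ⊢
      exact hdata i hi
    · intro hcon
      apply hne
      funext i
      have h1 : i ∈ (Finset.univ.filter fun i : Fin l => x' i = true) →
          i ∈ (Finset.univ.filter fun i : Fin l => x i = true) := fun h => hcon h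
      simp only [Finset.mem_filter, Finset.mem_univ, true_and] at h1
      cases hx : x i with
      | true => exact (hdata i hx).symm
      | false =>
        cases hx' : x' i with
        | true => rw [h1 hx'] at hx; exact absurd hx (by simp)
        | false => rfl
  exact absurd (Finset.card_lt_card hss) (not_lt.mpr hle)
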